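/- Let R = ℂ[E₁,E₂] with the derivation f determined by f(E₁) = E₁² − 2E₂, f(E₂) = E₁E₂, and δ = 4E₂ − E₁². Then for all natural numbers j and all r ≥ 1, the r-th iterate of f satisfies f^r(δʲ) − (−1)ʲ·(2j)(2j+1)⋯(2j+r−1)·E₁^{2j+r} ∈ E₂·ℂ[E₁,E₂], i.e. modulo the ideal generated by E₂, f^r(δʲ) is congruent to (−1)ʲ·(∏_{i=0}^{r−1}(2j+i))·E₁^{2j+r}. -/

import Mathlib

open MvPolynomial

private abbrev RR := MvPolynomial (Fin 2) ℂ

private lemma aux_stable (f : Derivation ℂ RR RR) (hf2 : f (X 1) = X 0 * X 1)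
    {p : RR} (hp : p ∈ Ideal.span {(X 1 : RR)}) : f p ∈ Ideal.span {(X 1 : RR)} := by
  rw [Ideal.mem_span_singleton] at hp ⊢
  obtain ⟨s, rfl⟩ := hp
  rw [Derivation.leibniz, hf2]
  simp only [smul_eq_mul]
  exact dvd_add ⟨f s, rfl⟩ ⟨s * X 0, by ring⟩

private lemma aux_pow (f : Derivation ℂ RR RR) (hf1 : f (X 0) = X 0 ^ 2 - 2 * X 1)
    (n : ℕ) : f ((X 0 : RR) ^ n) - (n : ℂ) • (X 0 : RR) ^ (n + 1)
      ∈ Ideal.span {(X 1 : RR)} := by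
  cases n with
  | zero => simp
  | succ m =>
    rw [Derivation.leibniz_pow, hf1, Ideal.mem_span_singleton]
    refine ⟨(-(2 * ((m : ℂ) + 1))) • (X 0 : RR) ^ m, ?_⟩
    simp only [Nat.succ_sub_one, nsmul_eq_mul, smul_eq_mul, smul_eq_C_mul, map_neg, map_mul,
      map_add, map_one, map_ofNat, map_natCast]
    push_cast
    ring

private lemma aux_step (f : Derivation ℂ RR RR) (hf1 : f (X 0) = X 0 ^ 2 - 2 * X 1)
    (hf2 : f (X 1) = X 0 * X 1) (p : RR) (n : ℕ) (c : ℂ)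
    (hp : p - c • (X 0 : RR) ^ n ∈ Ideal.span {(X 1 : RR)}) :
    f p - (c * n) • (X 0 : RR) ^ (n + 1) ∈ Ideal.span {(X 1 : RR)} := by
  have key : f p - (c * n) • (X 0 : RR) ^ (n + 1)
      = f (p - c • (X 0 : RR) ^ n)
        + c • (f ((X 0 : RR) ^ n) - (n : ℂ) • (X 0 : RR) ^ (n + 1)) := by
    rw [map_sub, Derivation.map_smul]
    rw [smul_sub, smul_smul]
    ring
  rw [key]
  refine Ideal.add_mem _ (aux_stable f hf2 hp) ?_
  rw [smul_eq_C_mul]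
  exact Ideal.mul_mem_left _ _ (aux_pow f hf1 n)

set_option maxHeartbeats 800000 in
set_option synthInstance.maxHeartbeats 200000 in
theorem f_iterate_on_delta_powers_mod_E2
    (f : Derivation ℂ (MvPolynomial (Fin 2) ℂ) (MvPolynomial (Fin 2) ℂ))
    (hf1 : f (X 0) = X 0 ^ 2 - 2 * X 1) (hf2 : f (X 1) = X 0 * X 1)
    (δ : MvPolynomial (Fin 2) ℂ) (hδ : δ = 4 * X 1 - X 0 ^ 2)
    (j r : ℕ) (hr : 1 ≤ r) :
    (f.toLinearMap ^ r) (δ ^ j) -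
        ((-1 : ℂ) ^ j * ∏ i ∈ Finset.range r, ((2 * j : ℂ) + i)) • (X 0) ^ (2 * j + r)
      ∈ Ideal.span {(X 1 : MvPolynomial (Fin 2) ℂ)} := by
  clear hr
  induction r with
  | zero =>
    simp only [pow_zero, Module.End.one_apply, Finset.range_zero, Finset.prod_empty, mul_one,
      Nat.add_zero]
    rw [← Ideal.Quotient.eq]
    have h0 : Ideal.Quotient.mk (Ideal.span {(X 1 : RR)}) (X 1) = 0 := by
      rw [Ideal.Quotient.eq_zero_iff_mem]
      exact Ideal.mem_span_singleton_self _
    rw [hδ, smul_eq_C_mul]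
    simp only [map_pow, map_sub, map_mul, h0, mul_zero, zero_sub, map_ofNat]
    have hC : Ideal.Quotient.mk (Ideal.span {(X 1 : RR)}) (C (-1 : ℂ)) = -1 := by
      simp
    rw [hC, pow_mul, ← mul_pow]
    congr 1
    ring
  | succ r ih =>
    have h := aux_step f hf1 hf2 ((f.toLinearMap ^ r) (δ ^ j)) (2 * j + r)
      ((-1 : ℂ) ^ j * ∏ i ∈ Finset.range r, ((2 * j : ℂ) + i)) ih
    have hpow : (f.toLinearMap ^ (r + 1)) (δ ^ j)
        = f ((f.toLinearMap ^ r) (δ ^ j)) := by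
      rw [pow_succ']
      rfl
    rw [hpow, Finset.prod_range_succ, ← mul_assoc]
    convert h using 3
    push_cast
    ring
    ring
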